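/- Define a partial application on the collection A* of inhabited subsets of 𝔾 × Ar (where application of a set a to a set b collects all results of applying elements of a to finite tuples of elements of b according to their arities). Let k be the set of all pairs (k_{FG}, p → q → p) where F, G ∈ 𝐆, p, q are arities, and k_{FG} : F → G → F is the curried first-projection function. Then for all inhabited a, b in the algebra, k·a·b = a. -/
import Mathlib


/-- The von Neumann numeral of `n`. -/
def natEmbed : ℕ → ZFSet
  | 0 => ∅
  | n + 1 => insert (natEmbed n) (natEmbed n)

/-- Finite types: the ground type `o` and arrow types `(σ)τ`. -/
inductive FType : Type
  | o : FType
  | arrow : FType → FType → FType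

/-- The set-theoretic extension of a finite type: `F_o = ω` and
`F_{(σ)τ}` is the set of all total (set) functions from `F_σ` to `F_τ`. -/
def Fext : FType → ZFSet
  | .o => ZFSet.omega
  | .arrow σ τ => ZFSet.funs (Fext σ) (Fext τ)

/-- The dependent product `∏_{n∈ℕ} Fₙ`: the set of functions `f` with domain `ω`
such that `f(n) ∈ Fₙ` for all `n`. -/
noncomputable def depProd (F : ℕ → ZFSet) : ZFSet :=
  ZFSet.sep
    (fun f => ∀ (n : ℕ) (y : ZFSet), ZFSet.pair (natEmbed n) y ∈ f → y ∈ F n)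
    (ZFSet.funs ZFSet.omega (ZFSet.sUnion (ZFSet.range F)))

/-- `𝐆`: the smallest collection of sets containing `ω`, closed under function
spaces and under countable dependent products. -/
inductive InG : ZFSet → Prop
  | omega : InG ZFSet.omega
  | funs {F G : ZFSet} : InG F → InG G → InG (ZFSet.funs F G)
  | prod (F : ℕ → ZFSet) : (∀ n, InG (F n)) → InG (depProd F)

/-- Arities: `o`; `p₀⋯pₙ → q` (at least one argument); countable products
`∏_{n∈ℕ} pₙ`. -/
inductive Arity : Type
  | o : Arity
  | arr : Arity → List Arity → Arity → Arity   -- `arr p ps q` is `p ps… → q`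
  | prod : (ℕ → Arity) → Arity

/-- Iterated set-theoretic function application `x y₀ ⋯ yₖ = z` (as a relation
via Kuratowski pairs). -/
def zAppList : ZFSet → List ZFSet → ZFSet → Prop
  | x, [], z => x = z
  | x, y :: ys, z => ∃ w : ZFSet, ZFSet.pair y w ∈ x ∧ zAppList w ys z

/-- Application of an arity-tagged element of `𝔾 × Ar` to a tuple:
`(x, p₀⋯pₙ→q)((y₀,p₀),…,(yₙ,pₙ)) ≃ (x y₀⋯yₙ, q)`, and
`(x, ∏ₘ pₘ)((m,o)) ≃ (x(m), pₘ)`. -/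
def appTuple : ZFSet × Arity → List (ZFSet × Arity) → ZFSet × Arity → Prop
  | (x, .arr p ps q), ys, (z, q') =>
      q' = q ∧ ys.map Prod.snd = p :: ps ∧ zAppList x (ys.map Prod.fst) z
  | (x, .prod pm), ys, (z, q) =>
      ∃ m : ℕ, ys = [(natEmbed m, .o)] ∧ q = pm m ∧ ZFSet.pair (natEmbed m) z ∈ x
  | (_, .o), _, _ => False

/-- The collecting application on subsets of `𝔾 × Ar`: `a·b` collects all
results of applying elements of `a` to tuples of elements of `b`; it is
defined iff the resulting set is inhabited. -/
def coll (a b : Set (ZFSet × Arity)) : Set (ZFSet × Arity) :=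
  { z | ∃ x ∈ a, ∃ ys : List (ZFSet × Arity), (∀ y ∈ ys, y ∈ b) ∧ appTuple x ys z }

/-- The carrier `𝔾 × Ar` (first components in `⋃𝐆`). -/
def Gr : Set (ZFSet × Arity) := { w | ∃ G : ZFSet, InG G ∧ w.1 ∈ G }

/-- The inner part `{(y, x) | y ∈ G}` of the curried constant function. -/
noncomputable def kInner (G x : ZFSet) : ZFSet :=
  ZFSet.sep (fun q => ∃ y ∈ G, q = ZFSet.pair y x)
    (ZFSet.powerset (ZFSet.powerset (G ∪ {x})))

/-- The curried first projection `k_{FG} : F → G → F`, `k_{FG} x y = x`. -/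
noncomputable def kFun (F G : ZFSet) : ZFSet :=
  ZFSet.sep (fun w => ∃ x ∈ F, w = ZFSet.pair x (kInner G x))
    (ZFSet.powerset (ZFSet.powerset
      (F ∪ ZFSet.powerset (ZFSet.powerset (ZFSet.powerset (F ∪ G))))))

/-- The `k` combinator of the algebra on inhabited subsets of `𝔾 × Ar`. -/
def Kset : Set (ZFSet × Arity) :=
  { w | ∃ F G : ZFSet, InG F ∧ InG G ∧ ∃ p q : Arity,
      w = (kFun F G, .arr p [] (.arr q [] p)) }

lemma mem_kInner_iff {G x z : ZFSet} :
    z ∈ kInner G x ↔ ∃ y ∈ G, z = ZFSet.pair y x := by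
  constructor
  · intro h; exact (ZFSet.mem_sep.1 h).2
  · rintro ⟨y, hy, rfl⟩
    refine ZFSet.mem_sep.2 ⟨?_, y, hy, rfl⟩
    rw [ZFSet.mem_powerset]
    intro u hu
    rw [ZFSet.mem_powerset]
    intro v hv
    simp only [ZFSet.pair, ZFSet.mem_pair] at hu
    rcases hu with rfl | rfl <;> simp only [ZFSet.mem_singleton, ZFSet.mem_pair] at hv <;>
      [skip; rcases hv with rfl | rfl] <;>
      simp_all [ZFSet.mem_union, ZFSet.mem_singleton]

lemma mem_kFun_iff {F G w : ZFSet} :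
    w ∈ kFun F G ↔ ∃ x ∈ F, w = ZFSet.pair x (kInner G x) := by
  constructor
  · intro h; exact (ZFSet.mem_sep.1 h).2
  · rintro ⟨x, hx, rfl⟩
    refine ZFSet.mem_sep.2 ⟨?_, x, hx, rfl⟩
    rw [ZFSet.mem_powerset]
    intro u hu
    rw [ZFSet.mem_powerset]
    intro v hv
    simp only [ZFSet.pair, ZFSet.mem_pair] at hu
    have hk : kInner G x ∈ ZFSet.powerset (ZFSet.powerset (ZFSet.powerset (F ∪ G))) := by
      rw [ZFSet.mem_powerset]
      intro t ht
      rcases mem_kInner_iff.1 ht with ⟨y, hy, rfl⟩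
      rw [ZFSet.mem_powerset]
      intro s hs
      rw [ZFSet.mem_powerset]
      intro r hr
      simp only [ZFSet.pair, ZFSet.mem_pair] at hs
      rcases hs with rfl | rfl <;>
        simp only [ZFSet.mem_singleton, ZFSet.mem_pair] at hr <;>
        [skip; rcases hr with rfl | rfl] <;>
        simp_all [ZFSet.mem_union]
    rcases hu with rfl | rfl <;> simp only [ZFSet.mem_singleton, ZFSet.mem_pair] at hv <;>
      [skip; rcases hv with rfl | rfl] <;>
      simp_all [ZFSet.mem_union]

theorem k_spec (a b : Set (ZFSet × Arity)) (ha : a.Nonempty) (hb : b.Nonempty)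
    (haG : a ⊆ Gr) (hbG : b ⊆ Gr) :
    coll (coll Kset a) b = a := by
  ext z
  constructor
  · rintro ⟨u, hu, ys, hys, happ⟩
    obtain ⟨v, hv, ys1, hys1, happ1⟩ := hu
    obtain ⟨F, G, hF, hG, p, q, rfl⟩ := hv
    obtain ⟨u1, u2⟩ := u
    obtain ⟨rfl, hmap, hzl⟩ := happ1
    -- ys1.map Prod.snd = [p], so ys1 = [(x, p)]
    match ys1, hmap with
    | [(x, p')], hmap =>
      simp only [List.map_cons, List.map_nil, List.cons.injEq] at hmap
      obtain ⟨rfl, -⟩ := hmap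
      obtain ⟨w, hw, rfl⟩ := hzl
      obtain ⟨x', hx', hpair⟩ := mem_kFun_iff.1 hw
      obtain ⟨rfl, rfl⟩ := ZFSet.pair_inj.1 hpair
      -- now u = (kInner G x, arr q [] p)
      obtain ⟨z1, q'⟩ := z
      obtain ⟨rfl, hmap2, hzl2⟩ := happ
      match ys, hmap2 with
      | [(y, q'')], hmap2 =>
        simp only [List.map_cons, List.map_nil, List.cons.injEq] at hmap2
        obtain ⟨rfl, -⟩ := hmap2
        obtain ⟨w2, hw2, rfl⟩ := hzl2
        obtain ⟨y', hy', hp2⟩ := mem_kInner_iff.1 hw2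
        obtain ⟨rfl, rfl⟩ := ZFSet.pair_inj.1 hp2
        exact hys1 _ (List.mem_singleton.2 rfl)
  · intro hz
    obtain ⟨x, p⟩ := z
    obtain ⟨F, hF, hxF⟩ := haG hz
    obtain ⟨⟨y, q⟩, hyb⟩ := hb
    obtain ⟨G, hG, hyG⟩ := hbG hyb
    refine ⟨(kInner G x, .arr q [] p), ?_, [(y, q)], ?_, ?_⟩
    · refine ⟨(kFun F G, .arr p [] (.arr q [] p)),
        ⟨F, G, hF, hG, p, q, rfl⟩, [(x, p)], ?_, ?_⟩
      · intro y hy; rw [List.mem_singleton] at hy; subst hy; exact hz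
      · exact ⟨rfl, rfl, kInner G x, mem_kFun_iff.2 ⟨x, hxF, rfl⟩, rfl⟩
    · intro y' hy'; rw [List.mem_singleton] at hy'; subst hy'; exact hyb
    · exact ⟨rfl, rfl, x, mem_kInner_iff.2 ⟨y, hyG, rfl⟩, rfl⟩
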